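/- Let P be a finite poset and F ⊆ [t]^n an induced P-free, induced P-saturated family, and suppose coordinate i is not separating for F. Then there exists an induced P-free, induced P-saturated family F' ⊆ [t]^n with |F'| = |F| such that f(i) ∈ {1, t} for every f ∈ F'. -/
import Mathlib


open Filter

/-- An induced copy of the poset `P` inside the family `F`. -/
def InducedCopy (P : Type) [PartialOrder P] {α : Type} [PartialOrder α]
    (F : Set α) : Prop :=
  ∃ φ : P → α, Function.Injective φ ∧ (∀ x, φ x ∈ F) ∧ ∀ x y, φ x ≤ φ y ↔ x ≤ y

/-- `F` is induced `P`-free. -/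
def PFree (P : Type) [PartialOrder P] {α : Type} [PartialOrder α] (F : Set α) : Prop :=
  ¬ InducedCopy P F

/-- `F` is induced `P`-free and induced `P`-saturated. -/
def PSaturated (P : Type) [PartialOrder P] {α : Type} [PartialOrder α] (F : Set α) : Prop :=
  PFree P F ∧ ∀ g ∉ F, InducedCopy P (insert g F)

/-- The lifting operator `L_i`, copying coordinate `i` into a new last coordinate. -/
def lift {t n : ℕ} (i : Fin n) (f : Fin n → Fin t) : Fin (n + 1) → Fin t :=
  Fin.snoc f (f i)

/-- The coordinate-dropping operator `D_i`. -/
def drop {t n : ℕ} (i : Fin (n + 1)) (f : Fin (n + 1) → Fin t) : Fin n → Fin t :=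
  fun x => f (i.succAbove x)

/-- Coordinate `i` is separating for `F`. -/
def Separating {t n : ℕ} (F : Set (Fin n → Fin t)) (i : Fin n) : Prop :=
  ∃ f ∈ F, ∃ f' ∈ F, f ≠ f' ∧ (∀ x, x ≠ i → f x ≤ f' x) ∧ f' i < f i

/-- The induced saturation number `sat*([t]^n, P)`. -/
noncomputable def satStar (t n : ℕ) (P : Type) [PartialOrder P] : ℕ :=
  sInf {m | ∃ F : Set (Fin n → Fin t), PSaturated P F ∧ F.ncard = m}

/-- The antichain on `k` elements. -/
def AC (k : ℕ) := Fin k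

instance (k : ℕ) : PartialOrder (AC k) where
  le := Eq
  le_refl _ := rfl
  le_trans _ _ _ h h' := Eq.trans h h'
  le_antisymm _ _ h _ := h

/-- The unique cover twin property. -/
def UCTP (P : Type) [PartialOrder P] : Prop :=
  ∀ x y : P, y ⋖ x → ∃ y', y' ≠ y ∧ y' ≠ x ∧ y' ⋖ x



lemma S12.copy_map {P α β : Type} [PartialOrder P] [PartialOrder α] [PartialOrder β]
    (A : Set α) (B : Set β) (Ψ : α → β)
    (hmem : ∀ a ∈ A, Ψ a ∈ B)
    (hinj : Set.InjOn Ψ A)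
    (hiso : ∀ a ∈ A, ∀ a' ∈ A, (Ψ a ≤ Ψ a' ↔ a ≤ a')) :
    InducedCopy P A → InducedCopy P B := by
  rintro ⟨φ, hφi, hφm, hφo⟩
  refine ⟨fun x => Ψ (φ x), ?_, fun x => hmem _ (hφm x), ?_⟩
  · intro x y h
    exact hφi (hinj (hφm x) (hφm y) h)
  · intro x y
    rw [hiso _ (hφm x) _ (hφm y), hφo]

lemma S12.copy_pull {P α β : Type} [PartialOrder P] [PartialOrder α] [PartialOrder β]
    (A : Set α) (Ψ : α → β)
    (hinj : Set.InjOn Ψ A)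
    (hiso : ∀ a ∈ A, ∀ a' ∈ A, (Ψ a ≤ Ψ a' ↔ a ≤ a')) :
    InducedCopy P (Ψ '' A) → InducedCopy P A := by
  rintro ⟨φ, hφi, hφm, hφo⟩
  have h : ∀ x, ∃ a, a ∈ A ∧ Ψ a = φ x := fun x => hφm x
  choose ψ hψA hψe using h
  refine ⟨ψ, ?_, hψA, ?_⟩
  · intro x y h
    apply hφi
    rw [← hψe, ← hψe, h]
  · intro x y
    rw [← hφo, ← hψe, ← hψe, hiso _ (hψA x) _ (hψA y)]


def S12cc {t n : ℕ} (i : Fin n) (f : Fin n → Fin t) : Fin t :=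
  if (f i : ℕ) = t - 1 then f i else ⟨0, (f i).pos⟩

def S12Phi {t n : ℕ} (i : Fin n) (f : Fin n → Fin t) : Fin n → Fin t :=
  Function.update f i (S12cc i f)

variable {t n : ℕ} (i : Fin n)

lemma S12.S12Phi_ne (f : Fin n → Fin t) (x : Fin n) (hx : x ≠ i) : S12Phi i f x = f x :=
  Function.update_of_ne hx _ _

lemma S12.S12Phi_eq (f : Fin n → Fin t) : S12Phi i f i = S12cc i f :=
  Function.update_self _ _ _

lemma S12S12.cc_mono (f f' : Fin n → Fin t) (h : f i ≤ f' i) : S12cc i f ≤ S12cc i f' := by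
  unfold S12cc
  by_cases h1 : (f i : ℕ) = t - 1
  · have hle : (f i : ℕ) ≤ (f' i : ℕ) := h
    have h2 : (f' i : ℕ) = t - 1 := by
      have := (f' i).isLt; omega
    rw [if_pos h1, if_pos h2]
    exact h
  · rw [if_neg h1]
    exact Fin.mk_le_of_le_val (Nat.zero_le _)

section main
variable {F : Set (Fin n → Fin t)}

lemma S12.key (hns : ¬ Separating F i) : ∀ f ∈ F, ∀ f' ∈ F, (∀ x, x ≠ i → f x ≤ f' x) → f ≤ f' := by
  intro f hf f' hf' hle
  by_cases h : f = f'
  · exact le_of_eq h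
  · have hi : f i ≤ f' i := by
      by_contra hc
      exact hns ⟨f, hf, f', hf', h, hle, lt_of_not_ge hc⟩
    intro x
    by_cases hx : x = i
    · exact hx ▸ hi
    · exact hle x hx

lemma S12.keyinj (hns : ¬ Separating F i) : ∀ f ∈ F, ∀ f' ∈ F, (∀ x, x ≠ i → f x = f' x) → f = f' := by
  intro f hf f' hf' h
  exact le_antisymm (S12.key i hns f hf f' hf' (fun x hx => (h x hx).le))
    (S12.key i hns f' hf' f hf (fun x hx => (h x hx).ge))

lemma S12.S12Phi_le (hns : ¬ Separating F i) : ∀ f ∈ F, ∀ f' ∈ F, (S12Phi i f ≤ S12Phi i f' ↔ f ≤ f') := by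
  intro f hf f' hf'
  constructor
  · intro h
    refine S12.key i hns f hf f' hf' (fun x hx => ?_)
    have := h x
    rwa [S12.S12Phi_ne i f x hx, S12.S12Phi_ne i f' x hx] at this
  · intro h x
    by_cases hx : x = i
    · rw [hx, S12.S12Phi_eq, S12.S12Phi_eq]
      exact S12S12.cc_mono i f f' (h i)
    · rw [S12.S12Phi_ne i f x hx, S12.S12Phi_ne i f' x hx]
      exact h x

lemma S12.S12Phi_inj (hns : ¬ Separating F i) : Set.InjOn (S12Phi i) F := by
  intro f hf f' hf' h
  refine S12.keyinj i hns f hf f' hf' (fun x hx => ?_)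
  rw [← S12.S12Phi_ne i f x hx, ← S12.S12Phi_ne i f' x hx, h]

end main

lemma S12.exists_a {F : Set (Fin n → Fin t)} (hns : ¬ Separating F i)
    (g : Fin n → Fin t) (hg : g ∉ S12Phi i '' F) :
    ∃ a : Fin t,
      Function.update g i a ∉ F ∧
      (∀ f ∈ F, (∀ x, x ≠ i → g x ≤ f x) → (a ≤ f i ↔ g i ≤ S12cc i f)) ∧
      (∀ f ∈ F, (∀ x, x ≠ i → f x ≤ g x) → (f i ≤ a ↔ S12cc i f ≤ g i)) := by
  classical
  have ht0 : 0 < t := (g i).pos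
  have hwT : (g i : ℕ) ≤ t - 1 := by have := (g i).isLt; omega
  have hs := F.toFinite
  set s := hs.toFinset with hsdef
  set D : Finset (Fin n → Fin t) :=
    s.filter (fun f => (∀ x, x ≠ i → f x ≤ g x) ∧ (f i : ℕ) < t - 1) with hD
  set U : Finset (Fin n → Fin t) :=
    s.filter (fun f => (∀ x, x ≠ i → g x ≤ f x) ∧ (f i : ℕ) < t - 1) with hU
  obtain ⟨dsup, hdle, hdsuple, hdsuplt⟩ :
      ∃ d : ℕ, (∀ f ∈ D, (f i : ℕ) ≤ d) ∧ (∀ m, (∀ f ∈ D, (f i : ℕ) ≤ m) → d ≤ m) ∧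
        (∀ m, 0 < m → (∀ f ∈ D, (f i : ℕ) < m) → d < m) :=
    ⟨D.sup (fun f => (f i : ℕ)), fun f hf => Finset.le_sup (f := fun f => (f i : ℕ)) hf,
      fun m hm => Finset.sup_le hm,
      fun m hm0 hm => (Finset.sup_lt_iff (by simpa using hm0)).mpr hm⟩
  obtain ⟨usup, hule, husuple, husuplt⟩ :
      ∃ d : ℕ, (∀ f ∈ U, (f i : ℕ) + 1 ≤ d) ∧ (∀ m, (∀ f ∈ U, (f i : ℕ) + 1 ≤ m) → d ≤ m) ∧
        (∀ m, 0 < m → (∀ f ∈ U, (f i : ℕ) + 1 < m) → d < m) :=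
    ⟨U.sup (fun f => (f i : ℕ) + 1), fun f hf => Finset.le_sup (f := fun f => (f i : ℕ) + 1) hf,
      fun m hm => Finset.sup_le hm,
      fun m hm0 hm => (Finset.sup_lt_iff (by simpa using hm0)).mpr hm⟩
  set aN : ℕ := if (g i : ℕ) = t - 1 then t - 1
    else if (g i : ℕ) = 0 then dsup else max dsup usup with haN
  clear_value s D U aN
  -- membership in D and U
  have memD : ∀ f, f ∈ D ↔ f ∈ F ∧ (∀ x, x ≠ i → f x ≤ g x) ∧ (f i : ℕ) < t - 1 := by
    intro f
    rw [hD, Finset.mem_filter, hsdef, Set.Finite.mem_toFinset]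
  have memU : ∀ f, f ∈ U ↔ f ∈ F ∧ (∀ x, x ≠ i → g x ≤ f x) ∧ (f i : ℕ) < t - 1 := by
    intro f
    rw [hU, Finset.mem_filter, hsdef, Set.Finite.mem_toFinset]
  -- cross comparison
  have cross : ∀ f ∈ F, (∀ x, x ≠ i → f x ≤ g x) → ∀ f' ∈ F, (∀ x, x ≠ i → g x ≤ f' x) →
      (f i : ℕ) ≤ (f' i : ℕ) := by
    intro f hf hdn f' hf' hup
    exact S12.key i hns f hf f' hf' (fun x hx => le_trans (hdn x hx) (hup x hx)) i
  -- value of S12cc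
  have hS12ccval : ∀ f : Fin n → Fin t,
      (S12cc i f : ℕ) = if (f i : ℕ) = t - 1 then t - 1 else 0 := by
    intro f
    unfold S12cc
    split
    · rename_i h; exact h
    · rfl
  have hdsup_le : dsup ≤ t - 1 :=
    hdsuple _ (fun f1 hf1 => le_of_lt ((memD f1).mp hf1).2.2)
  have husup_le : usup ≤ t - 1 :=
    husuple _ (fun f1 hf1 => ((memU f1).mp hf1).2.2)
  have haNT : aN ≤ t - 1 := by
    rw [haN]
    split
    · exact le_refl _
    · split
      · exact hdsup_le
      · exact max_le hdsup_le husup_le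
  have haNlt : aN < t := by omega
  -- dsup is strictly below t-1 when t-1 > 0
  have hdsup_lt : 0 < t - 1 → dsup < t - 1 := fun hT =>
    hdsuplt _ hT (fun f1 hf1 => ((memD f1).mp hf1).2.2)
  -- if there is a "down" element with top value, U is empty (so usup small)
  have husup_lt : ∀ f ∈ F, (∀ x, x ≠ i → f x ≤ g x) → (f i : ℕ) = t - 1 →
      0 < t - 1 → usup < t - 1 := by
    intro f hf hdn hvf hT
    refine husuplt _ hT ?_
    intro f2 hf2
    obtain ⟨hf2F, hup2, hv2⟩ := (memU f2).mp hf2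
    have := cross f hf hdn f2 hf2F hup2
    omega
  refine ⟨⟨aN, haNlt⟩, ?_, ?_, ?_⟩
  · -- update g i a ∉ F
    intro hmem
    set u := Function.update g i (⟨aN, haNlt⟩ : Fin t) with hu
    clear_value u
    have huoff : ∀ x, x ≠ i → u x = g x := fun x hx => hu ▸ Function.update_of_ne hx _ _
    have hui : (u i : ℕ) = aN := by rw [hu]; rw [Function.update_self]
    by_cases hw : (g i : ℕ) = t - 1
    · -- then u = g and S12Phi u = u, contradiction with hg
      have haNv : aN = t - 1 := by rw [haN, if_pos hw]
      have hgu : g = u := by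
        funext x
        by_cases hx : x = i
        · subst hx; exact Fin.ext (by omega)
        · exact (huoff x hx).symm
      have hS12cc : S12cc i u = u i := by
        unfold S12cc; rw [if_pos (by omega)]
      exact hg ⟨u, hmem, by unfold S12Phi; rw [hS12cc, Function.update_eq_self, hgu]⟩
    · have hT : 0 < t - 1 := by omega
      by_cases hw0 : (g i : ℕ) = 0
      · have haNv : aN = dsup := by rw [haN, if_neg hw, if_pos hw0]
        have hlt : aN < t - 1 := by have := hdsup_lt hT; omega
        have hS12cc : S12cc i u = ⟨0, ht0⟩ := by
          unfold S12cc; rw [if_neg (by omega)]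
        have : S12Phi i u = g := by
          unfold S12Phi
          rw [hS12cc, hu, Function.update_idem]
          have : (⟨0, ht0⟩ : Fin t) = g i := Fin.ext (by simp [hw0])
          rw [this, Function.update_eq_self]
        exact hg ⟨u, hmem, this⟩
      · have haNv : aN = max dsup usup := by rw [haN, if_neg hw, if_neg hw0]
        have hdn : ∀ x, x ≠ i → u x ≤ g x := fun x hx => (huoff x hx).le
        have hup : ∀ x, x ≠ i → g x ≤ u x := fun x hx => (huoff x hx).ge
        by_cases haT : aN = t - 1
        · have h1 := hdsup_lt hT
          have h2 := husup_lt u hmem hdn (by omega) hT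
          omega
        · have huU : u ∈ U := (memU u).mpr ⟨hmem, hup, by omega⟩
          have := hule u huU
          omega
  · -- P1
    intro f hf hup
    rw [Fin.le_def, Fin.le_def, hS12ccval f]
    show aN ≤ (f i : ℕ) ↔ (g i : ℕ) ≤ _
    by_cases hvf : (f i : ℕ) = t - 1
    · rw [if_pos hvf]; omega
    · rw [if_neg hvf]
      have hvfT : (f i : ℕ) < t - 1 := by have := (f i).isLt; omega
      by_cases hw : (g i : ℕ) = t - 1
      · have haNv : aN = t - 1 := by rw [haN, if_pos hw]
        omega
      · by_cases hw0 : (g i : ℕ) = 0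
        · have haNv : aN = dsup := by rw [haN, if_neg hw, if_pos hw0]
          have : dsup ≤ (f i : ℕ) := by
            refine hdsuple _ ?_
            intro f1 hf1
            obtain ⟨h1F, h1dn, _⟩ := (memD f1).mp hf1
            exact cross f1 h1F h1dn f hf hup
          omega
        · have haNv : aN = max dsup usup := by rw [haN, if_neg hw, if_neg hw0]
          have hfU : f ∈ U := (memU f).mpr ⟨hf, hup, hvfT⟩
          have := hule f hfU
          omega
  · -- P2
    intro f hf hdn
    rw [Fin.le_def, Fin.le_def, hS12ccval f]
    show (f i : ℕ) ≤ aN ↔ _ ≤ (g i : ℕ)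
    by_cases hvf : (f i : ℕ) = t - 1
    · rw [if_pos hvf]
      by_cases hw : (g i : ℕ) = t - 1
      · have haNv : aN = t - 1 := by rw [haN, if_pos hw]
        omega
      · have hT : 0 < t - 1 := by omega
        have h1 := hdsup_lt hT
        have h2 := husup_lt f hf hdn hvf hT
        by_cases hw0 : (g i : ℕ) = 0
        · have haNv : aN = dsup := by rw [haN, if_neg hw, if_pos hw0]
          omega
        · have haNv : aN = max dsup usup := by rw [haN, if_neg hw, if_neg hw0]
          omega
    · rw [if_neg hvf]
      have hvfT : (f i : ℕ) < t - 1 := by have := (f i).isLt; omega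
      by_cases hw : (g i : ℕ) = t - 1
      · have haNv : aN = t - 1 := by rw [haN, if_pos hw]
        omega
      · have hfD : f ∈ D := (memD f).mpr ⟨hf, hdn, hvfT⟩
        have := hdle f hfD
        by_cases hw0 : (g i : ℕ) = 0
        · have haNv : aN = dsup := by rw [haN, if_neg hw, if_pos hw0]
          omega
        · have haNv : aN = max dsup usup := by rw [haN, if_neg hw, if_neg hw0]
          omega

lemma S12.final {F : Set (Fin n → Fin t)}
    (P : Type) [PartialOrder P]
    (hfree : ¬ InducedCopy P F)
    (hsata : ∀ g ∉ F, InducedCopy P (insert g F))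
    (hns : ¬ Separating F i) :
    (¬ InducedCopy P (S12Phi i '' F)) ∧
      (∀ g ∉ S12Phi i '' F, InducedCopy P (insert g (S12Phi i '' F))) ∧
      (S12Phi i '' F).ncard = F.ncard ∧
      ∀ f ∈ S12Phi i '' F, (f i : ℕ) = 0 ∨ (f i : ℕ) = t - 1 := by
  classical
  refine ⟨?_, ?_, Set.ncard_image_of_injOn (S12.S12Phi_inj i hns), ?_⟩
  · intro hc
    exact hfree (S12.copy_pull F (S12Phi i) (S12.S12Phi_inj i hns) (S12.S12Phi_le i hns) hc)
  · intro g hg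
    obtain ⟨a, hgF, P1, P2⟩ := S12.exists_a i hns g hg
    have hcopy := hsata _ hgF
    set g' := Function.update g i a with hg'
    have hg'i : g' i = a := by rw [hg']; exact Function.update_self _ _ _
    have hg'ne : ∀ z, z ≠ i → g' z = g z := fun z hz => by
      rw [hg']; exact Function.update_of_ne hz _ _
    refine S12.copy_map (insert g' F) (insert g (S12Phi i '' F))
      (fun h => if h = g' then g else S12Phi i h) ?_ ?_ ?_ hcopy
    · rintro h (rfl | hF)
      · beta_reduce
        rw [if_pos rfl]; exact Set.mem_insert _ _
      · have hne : h ≠ g' := fun e => hgF (e ▸ hF)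
        beta_reduce
        rw [if_neg hne]; exact Set.mem_insert_of_mem _ ⟨h, hF, rfl⟩
    · intro x hx y hy hxy
      beta_reduce at hxy
      rcases hx with rfl | hxF <;> rcases hy with rfl | hyF
      · rfl
      · exfalso
        have hne : y ≠ g' := fun e => hgF (e ▸ hyF)
        rw [if_pos rfl, if_neg hne] at hxy
        exact hg ⟨y, hyF, hxy.symm⟩
      · exfalso
        have hne : x ≠ g' := fun e => hgF (e ▸ hxF)
        rw [if_pos rfl, if_neg hne] at hxy
        exact hg ⟨x, hxF, hxy⟩
      · have hnex : x ≠ g' := fun e => hgF (e ▸ hxF)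
        have hney : y ≠ g' := fun e => hgF (e ▸ hyF)
        rw [if_neg hnex, if_neg hney] at hxy
        exact S12.S12Phi_inj i hns hxF hyF hxy
    · intro x hx y hy
      beta_reduce
      rcases hx with rfl | hxF <;> rcases hy with rfl | hyF
      · simp
      · have hney : y ≠ g' := fun e => hgF (e ▸ hyF)
        rw [if_pos rfl, if_neg hney]
        constructor
        · intro h
          have hup : ∀ z, z ≠ i → g z ≤ y z := fun z hz => by
            have := h z; rwa [S12.S12Phi_ne i y z hz] at this
          intro z
          by_cases hz : z = i
          · rw [hz, hg'i]
            refine (P1 y hyF hup).mpr ?_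
            have := h i; rwa [S12.S12Phi_eq] at this
          · rw [hg'ne z hz]; exact hup z hz
        · intro h
          have hup : ∀ z, z ≠ i → g z ≤ y z := fun z hz => by
            have := h z; rwa [hg'ne z hz] at this
          intro z
          by_cases hz : z = i
          · rw [hz, S12.S12Phi_eq]
            refine (P1 y hyF hup).mp ?_
            have := h i; rwa [hg'i] at this
          · rw [S12.S12Phi_ne i y z hz]; exact hup z hz
      · have hnex : x ≠ g' := fun e => hgF (e ▸ hxF)
        rw [if_neg hnex, if_pos rfl]
        constructor
        · intro h
          have hdn : ∀ z, z ≠ i → x z ≤ g z := fun z hz => by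
            have := h z; rwa [S12.S12Phi_ne i x z hz] at this
          intro z
          by_cases hz : z = i
          · rw [hz, hg'i]
            refine (P2 x hxF hdn).mpr ?_
            have := h i; rwa [S12.S12Phi_eq] at this
          · rw [hg'ne z hz]; exact hdn z hz
        · intro h
          have hdn : ∀ z, z ≠ i → x z ≤ g z := fun z hz => by
            have := h z; rwa [hg'ne z hz] at this
          intro z
          by_cases hz : z = i
          · rw [hz, S12.S12Phi_eq]
            refine (P2 x hxF hdn).mp ?_
            have := h i; rwa [hg'i] at this
          · rw [S12.S12Phi_ne i x z hz]; exact hdn z hz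
      · have hnex : x ≠ g' := fun e => hgF (e ▸ hxF)
        have hney : y ≠ g' := fun e => hgF (e ▸ hyF)
        rw [if_neg hnex, if_neg hney]
        exact S12.S12Phi_le i hns x hxF y hyF
  · rintro f ⟨f0, hf0, rfl⟩
    rw [S12.S12Phi_eq]
    unfold S12cc
    split
    · rename_i h; right; exact h
    · left; rfl

theorem stmt12 (t n : ℕ) (P : Type) [PartialOrder P] [Finite P]
    (F : Set (Fin n → Fin t)) (hsat : PSaturated P F)
    (i : Fin n) (hns : ¬ Separating F i) :
    ∃ F' : Set (Fin n → Fin t), PSaturated P F' ∧ F'.ncard = F.ncard ∧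
      ∀ f ∈ F', (f i : ℕ) = 0 ∨ (f i : ℕ) = t - 1 := by
  obtain ⟨hfree, hsata⟩ := hsat
  obtain ⟨h1, h2, h3, h4⟩ := S12.final i P hfree hsata hns
  exact ⟨S12Phi i '' F, ⟨h1, h2⟩, h3, h4⟩
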